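/- Let P = {p_n} be orthonormal polynomials satisfying the three-term recurrence ξ·p_n(ξ) = β_{n−1}p_{n−1}(ξ) + δ_n·p_n(ξ) + β_n·p_{n+1}(ξ) with β_n > 0, δ_n ∈ ℝ, and let g be an integrable function decaying superalgebraically. Define φ_n(x) = (e^{iθ_n}/√(2π))·∫ e^{ixξ}p_n(ξ)g(ξ) dξ for a sequence θ_n ∈ [0,2π). Then φ_n'(x) = −conj(b_{n−1})·φ_{n−1}(x) + i·c_n·φ_n(x) + b_n·φ_{n+1}(x), where b_n = i·e^{i(θ_n − θ_{n+1})}·β_n and c_n = δ_n. -/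

import Mathlib

open Complex MeasureTheory


lemma poly_eval_bound (q : Polynomial ℝ) :
    ∃ C : ℝ, 0 ≤ C ∧ ∀ x : ℝ, |q.eval x| ≤ C * (1 + |x|) ^ q.natDegree := by
  refine ⟨∑ i ∈ Finset.range (q.natDegree + 1), |q.coeff i|,
    Finset.sum_nonneg fun _ _ => abs_nonneg _, fun x => ?_⟩
  rw [Polynomial.eval_eq_sum_range, Finset.sum_mul]
  refine (Finset.abs_sum_le_sum_abs _ _).trans (Finset.sum_le_sum fun i hi => ?_)
  rw [abs_mul, _root_.abs_pow]
  have h1 : (0:ℝ) ≤ 1 + |x| := by positivity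
  have : |x| ^ i ≤ (1 + |x|) ^ q.natDegree := by
    calc |x| ^ i ≤ (1 + |x|) ^ i := pow_le_pow_left₀ (abs_nonneg x) (by linarith) i
    _ ≤ (1 + |x|) ^ q.natDegree :=
      pow_le_pow_right₀ (by linarith [abs_nonneg x]) (Nat.lt_succ_iff.mp (Finset.mem_range.mp hi))
  exact mul_le_mul_of_nonneg_left this (abs_nonneg _)

lemma norm_exp_I_mul (x ξ : ℝ) : ‖Complex.exp (I * x * ξ)‖ = 1 := by
  rw [Complex.norm_exp]
  simp

lemma integrable_aux (g : ℝ → ℂ) (hg : Integrable g)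
    (hgdecay : ∀ k : ℕ, Integrable (fun ξ : ℝ => ‖g ξ‖ * (1 + |ξ|) ^ k))
    (q : Polynomial ℝ) (x : ℝ) :
    Integrable (fun ξ : ℝ => Complex.exp (I * x * ξ) * ((q.eval ξ : ℝ) : ℂ) * g ξ) := by
  obtain ⟨C, hC0, hC⟩ := poly_eval_bound q
  have hmeas : AEStronglyMeasurable
      (fun ξ : ℝ => Complex.exp (I * x * ξ) * ((q.eval ξ : ℝ) : ℂ) * g ξ) volume := by
    exact ((Continuous.aestronglyMeasurable (by
      exact (Complex.continuous_exp.comp (by fun_prop)).mul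
        (Complex.continuous_ofReal.comp q.continuous))).mul hg.aestronglyMeasurable)
  refine ((hgdecay q.natDegree).const_mul C).mono' hmeas (Filter.Eventually.of_forall fun ξ => ?_)
  rw [norm_mul, norm_mul, norm_exp_I_mul, one_mul, Complex.norm_real]
  calc |q.eval ξ| * ‖g ξ‖ ≤ C * (1 + |ξ|) ^ q.natDegree * ‖g ξ‖ :=
        mul_le_mul_of_nonneg_right (hC ξ) (norm_nonneg _)
    _ = C * (‖g ξ‖ * (1 + |ξ|) ^ q.natDegree) := by ring

lemma key_deriv (g : ℝ → ℂ) (hg : Integrable g)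
    (hgdecay : ∀ k : ℕ, Integrable (fun ξ : ℝ => ‖g ξ‖ * (1 + |ξ|) ^ k))
    (q : Polynomial ℝ) (x : ℝ) :
    HasDerivAt (fun y : ℝ => ∫ ξ : ℝ, Complex.exp (I * y * ξ) * ((q.eval ξ : ℝ) : ℂ) * g ξ)
      (∫ ξ : ℝ, I * ξ * (Complex.exp (I * x * ξ) * ((q.eval ξ : ℝ) : ℂ) * g ξ)) x := by
  obtain ⟨C, hC0, hC⟩ := poly_eval_bound q
  set F : ℝ → ℝ → ℂ := fun y ξ => Complex.exp (I * y * ξ) * ((q.eval ξ : ℝ) : ℂ) * g ξ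
  set F' : ℝ → ℝ → ℂ := fun y ξ => I * ξ * (Complex.exp (I * y * ξ) * ((q.eval ξ : ℝ) : ℂ) * g ξ)
  have hF'bound : ∀ (y : ℝ) (ξ : ℝ), ‖F' y ξ‖ ≤ C * (‖g ξ‖ * (1 + |ξ|) ^ (q.natDegree + 1)) := by
    intro y ξ
    have : ‖F' y ξ‖ = |ξ| * (|q.eval ξ| * ‖g ξ‖) := by
      simp only [F', norm_mul, norm_exp_I_mul, Complex.norm_I, Complex.norm_real,
        Real.norm_eq_abs, one_mul]
    rw [this]
    have h1 : |ξ| ≤ 1 + |ξ| := by linarith [abs_nonneg ξ]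
    have h2 : |q.eval ξ| ≤ C * (1 + |ξ|) ^ q.natDegree := hC ξ
    calc |ξ| * (|q.eval ξ| * ‖g ξ‖)
        ≤ (1 + |ξ|) * (C * (1 + |ξ|) ^ q.natDegree * ‖g ξ‖) := by
          apply mul_le_mul h1 (mul_le_mul_of_nonneg_right h2 (norm_nonneg _))
            (by positivity) (by positivity)
      _ = C * (‖g ξ‖ * (1 + |ξ|) ^ (q.natDegree + 1)) := by ring
  refine (hasDerivAt_integral_of_dominated_loc_of_deriv_le (F := F) (F' := F')
    (x₀ := x) (bound := fun ξ => C * (‖g ξ‖ * (1 + |ξ|) ^ (q.natDegree + 1)))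
    (s := Metric.ball x 1) (Metric.ball_mem_nhds x one_pos)
    (Filter.Eventually.of_forall fun y => (integrable_aux g hg hgdecay q y).aestronglyMeasurable)
    (integrable_aux g hg hgdecay q x)
    ?_ (Filter.Eventually.of_forall fun ξ y _ => hF'bound y ξ)
    ((hgdecay (q.natDegree + 1)).const_mul C)
    (Filter.Eventually.of_forall fun ξ y _ => ?_)).2
  · -- measurability of F' x
    exact (((continuous_const.mul Complex.continuous_ofReal :
        Continuous fun ξ : ℝ => I * (ξ : ℂ)).aestronglyMeasurable).mul
      (integrable_aux g hg hgdecay q x).aestronglyMeasurable).congr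
      (Filter.Eventually.of_forall fun ξ => by simp only [Pi.mul_apply, F, F'])
  · -- pointwise derivative
    have h0 := (hasDerivAt_id y).ofReal_comp
    have h1 :=
      (h0.const_mul I).mul_const (ξ : ℂ)
    have h2 := (h1.cexp).mul_const (((q.eval ξ : ℝ) : ℂ) * g ξ)
    convert h2 using 1
    · rfl
    · funext z; simp only [F, id]; ring
    · simp only [F', id, Complex.ofReal_one]; ring

theorem fourier_weighted_OP_hasDerivAt
    (p : ℕ → Polynomial ℝ) (β δ : ℕ → ℝ) (θ : ℕ → ℝ)
    (hdeg : ∀ n, (p n).natDegree = n)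
    (hβ : ∀ n, 0 < β n)
    (hθ : ∀ n, θ n ∈ Set.Ico (0 : ℝ) (2 * Real.pi))
    (hrec : ∀ n : ℕ, Polynomial.X * p n =
      (if n = 0 then 0 else Polynomial.C (β (n - 1)) * p (n - 1)) +
        Polynomial.C (δ n) * p n + Polynomial.C (β n) * p (n + 1))
    (g : ℝ → ℂ) (hg : Integrable g)
    (hgdecay : ∀ k : ℕ, Integrable (fun ξ : ℝ => ‖g ξ‖ * (1 + |ξ|) ^ k))
    (φ : ℕ → ℝ → ℂ)
    (hφ : ∀ n x, φ n x = Complex.exp (I * θ n) / (Real.sqrt (2 * Real.pi) : ℂ) *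
      ∫ ξ : ℝ, Complex.exp (I * x * ξ) * (((p n).eval ξ : ℝ) : ℂ) * g ξ)
    (b : ℕ → ℂ) (hb : ∀ n, b n = I * Complex.exp (I * (θ n - θ (n + 1))) * β n)
    (c : ℕ → ℝ) (hc : ∀ n, c n = δ n) :
    ∀ (n : ℕ) (x : ℝ), HasDerivAt (φ n)
      ((if n = 0 then 0 else -(starRingEnd ℂ) (b (n - 1)) * φ (n - 1) x) +
        I * c n * φ n x + b n * φ (n + 1) x) x := by
  intro n x
  set S : ℂ := (Real.sqrt (2 * Real.pi) : ℂ) with hS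
  have hS0 : S ≠ 0 := by
    rw [hS]
    norm_cast
    positivity
  set E : ℕ → ℂ := fun m => Complex.exp (I * θ m) with hE
  have hE0 : ∀ m, E m ≠ 0 := fun m => Complex.exp_ne_zero _
  set J : ℕ → ℂ := fun m => ∫ ξ : ℝ, Complex.exp (I * x * ξ) * (((p m).eval ξ : ℝ) : ℂ) * g ξ
    with hJ
  have hφx : ∀ m, φ m x = E m / S * J m := fun m => hφ m x
  have hφfun : φ n = fun y : ℝ =>
      E n / S * ∫ ξ : ℝ, Complex.exp (I * y * ξ) * (((p n).eval ξ : ℝ) : ℂ) * g ξ :=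
    funext fun y => hφ n y
  have hd := HasDerivAt.const_mul (E n / S) (key_deriv g hg hgdecay (p n) x)
  set a : ℂ := if n = 0 then 0 else ((β (n - 1) : ℝ) : ℂ) * I with ha
  have i1 : Integrable (fun ξ : ℝ =>
      a * (Complex.exp (I * x * ξ) * (((p (n - 1)).eval ξ : ℝ) : ℂ) * g ξ)) :=
    (integrable_aux g hg hgdecay (p (n - 1)) x).const_mul a
  have i2 : Integrable (fun ξ : ℝ =>
      ((δ n : ℂ) * I) * (Complex.exp (I * x * ξ) * (((p n).eval ξ : ℝ) : ℂ) * g ξ)) :=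
    (integrable_aux g hg hgdecay (p n) x).const_mul _
  have i3 : Integrable (fun ξ : ℝ =>
      ((β n : ℂ) * I) * (Complex.exp (I * x * ξ) * (((p (n + 1)).eval ξ : ℝ) : ℂ) * g ξ)) :=
    (integrable_aux g hg hgdecay (p (n + 1)) x).const_mul _
  have i12 : Integrable (fun ξ : ℝ =>
      a * (Complex.exp (I * x * ξ) * (((p (n - 1)).eval ξ : ℝ) : ℂ) * g ξ) +
      ((δ n : ℂ) * I) * (Complex.exp (I * x * ξ) * (((p n).eval ξ : ℝ) : ℂ) * g ξ)) := i1.add i2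
  have hptw : (fun ξ : ℝ => I * ξ * (Complex.exp (I * x * ξ) * (((p n).eval ξ : ℝ) : ℂ) * g ξ))
      = fun ξ : ℝ =>
        a * (Complex.exp (I * x * ξ) * (((p (n - 1)).eval ξ : ℝ) : ℂ) * g ξ) +
        ((δ n : ℂ) * I) * (Complex.exp (I * x * ξ) * (((p n).eval ξ : ℝ) : ℂ) * g ξ) +
        ((β n : ℂ) * I) * (Complex.exp (I * x * ξ) * (((p (n + 1)).eval ξ : ℝ) : ℂ) * g ξ) := by
    funext ξ
    have h := congrArg (Polynomial.eval ξ) (hrec n)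
    simp only [Polynomial.eval_mul, Polynomial.eval_add, Polynomial.eval_X, Polynomial.eval_C,
      Polynomial.eval_zero, apply_ite (Polynomial.eval ξ)] at h
    rw [ha]
    rcases eq_or_ne n 0 with h0 | h0
    · subst h0
      rw [if_pos rfl] at h ⊢
      rw [zero_add] at h
      have h2 : (ξ : ℂ) * (((p 0).eval ξ : ℝ) : ℂ) =
          (δ 0 : ℂ) * (((p 0).eval ξ : ℝ) : ℂ) + (β 0 : ℂ) * (((p (0 + 1)).eval ξ : ℝ) : ℂ) := by
        exact_mod_cast h
      linear_combination (Complex.exp (I * x * ξ) * g ξ * I) * h2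
    · rw [if_neg h0] at h ⊢
      have h2 : (ξ : ℂ) * (((p n).eval ξ : ℝ) : ℂ) =
          ((β (n - 1) : ℝ) : ℂ) * (((p (n - 1)).eval ξ : ℝ) : ℂ) +
          (δ n : ℂ) * (((p n).eval ξ : ℝ) : ℂ) +
          (β n : ℂ) * (((p (n + 1)).eval ξ : ℝ) : ℂ) := by
        exact_mod_cast h
      linear_combination (Complex.exp (I * x * ξ) * g ξ * I) * h2
  have hsplit : (∫ ξ : ℝ, I * ξ * (Complex.exp (I * x * ξ) * (((p n).eval ξ : ℝ) : ℂ) * g ξ))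
      = a * J (n - 1) + ((δ n : ℂ) * I) * J n + ((β n : ℂ) * I) * J (n + 1) := by
    rw [hptw, integral_add i12 i3, integral_add i1 i2, integral_const_mul,
      integral_const_mul, integral_const_mul]
  have hder : HasDerivAt (φ n)
      (E n / S * (a * J (n - 1) + ((δ n : ℂ) * I) * J n + ((β n : ℂ) * I) * J (n + 1))) x := by
    rw [← hsplit]
    exact hd.congr_of_eventuallyEq (Filter.Eventually.of_forall fun y => hφ n y)
  convert hder using 1
  have hbE : ∀ m, b m = I * (E m / E (m + 1)) * β m := by
    intro m
    rw [hb, hE]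
    congr 2
    rw [mul_sub, Complex.exp_sub]
  simp only [hφx, hc]
  by_cases h0 : n = 0
  · subst h0
    rw [if_pos rfl, ha, if_pos rfl, hbE 0]
    field_simp [hS0, hE0 0, hE0 1]
    ring
  · have hn1 : n - 1 + 1 = n := Nat.succ_pred_eq_of_pos (Nat.pos_of_ne_zero h0)
    have hconj : -(starRingEnd ℂ) (b (n - 1)) = I * (E n / E (n - 1)) * β (n - 1) := by
      rw [hb, hn1]
      have hcc : (starRingEnd ℂ)
          (I * Complex.exp (I * ((θ (n-1) : ℂ) - (θ n : ℂ))) * (β (n-1) : ℂ))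
          = (-I) * Complex.exp (I * ((θ n : ℂ) - (θ (n-1) : ℂ))) * (β (n-1) : ℂ) := by
        rw [map_mul, map_mul, Complex.conj_I, ← Complex.exp_conj, Complex.conj_ofReal]
        congr 2
        simp only [map_mul, map_sub, Complex.conj_I, Complex.conj_ofReal]
        ring
      rw [hcc, hE, mul_sub, Complex.exp_sub]
      ring
    rw [if_neg h0, ha, if_neg h0, hconj, hbE n]
    field_simp [hS0, hE0 n, hE0 (n-1), hE0 (n+1)]
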